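/- Let δ ≥ 2 and p^{(Y)}(t, x, y) be the transition density of the diffusion dY_t = −√(1 − Y_t²) dB_t − (δ/2) Y_t dt given by the Gegenbauer eigenfunction expansion. Then there is a constant C depending only on δ such that |p^{(Y)}(t, x, y) − p^{(Y)}(y)| ≤ C e^{−(δ/2) t} for all x, y ∈ [−1, 1] and t ≥ 1, where p^{(Y)}(y) = (1 − y²)^{δ/2 − 1} / ∫_{−1}^1 (1 − s²)^{δ/2 − 1} ds is the stationary density. -/

import Mathlib

open Filter Set Topology Polynomial

noncomputable section

/-- The Gegenbauer (ultraspherical) polynomial `C_n^{(α)}`, defined by the standard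
recurrence `C_0 = 1`, `C_1 = 2αx`, `n C_n = 2x(n + α − 1) C_{n−1} − (n + 2α − 2) C_{n−2}`. -/
def gegenbauer (α : ℝ) : ℕ → Polynomial ℝ
  | 0 => 1
  | 1 => Polynomial.C (2 * α) * Polynomial.X
  | n + 2 =>
      Polynomial.C (2 * ((n : ℝ) + 1 + α) / ((n : ℝ) + 2)) * Polynomial.X
          * gegenbauer α (n + 1)
        - Polynomial.C (((n : ℝ) + 2 * α) / ((n : ℝ) + 2)) * gegenbauer α n

/-- The transition density `p^{(Y)}(t, x, y)` of the diffusion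
`dY_t = −√(1 − Y_t²) dB_t − (δ/2) Y_t dt`, given by its Gegenbauer eigenfunction
expansion. -/
def transDensity (δ t x y : ℝ) : ℝ :=
  ∑' n : ℕ,
    (1 - y ^ 2) ^ (δ / 2 - 1)
      * (gegenbauer (δ / 2 - 1 / 2) n).eval x
      * (gegenbauer (δ / 2 - 1 / 2) n).eval y
      / (∫ s in (-1 : ℝ)..1,
          (1 - s ^ 2) ^ (δ / 2 - 1) * ((gegenbauer (δ / 2 - 1 / 2) n).eval s) ^ 2)
      * Real.exp (-((n : ℝ) / 2) * ((n : ℝ) + δ - 1) * t)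

/-- The stationary density `p^{(Y)}(y) = (1 − y²)^{δ/2 − 1} / ∫_{−1}^1 (1 − s²)^{δ/2 − 1} ds`. -/
def stationaryDensity (δ y : ℝ) : ℝ :=
  (1 - y ^ 2) ^ (δ / 2 - 1) / ∫ s in (-1 : ℝ)..1, (1 - s ^ 2) ^ (δ / 2 - 1)

lemma abs_mul_le {c C u B : ℝ} (hc : 0 ≤ c) (hC : c ≤ C) (hu : |u| ≤ B) :
    |c * u| ≤ C * B := by
  rw [abs_mul, abs_of_nonneg hc]
  exact mul_le_mul hC hu (abs_nonneg _) (le_trans hc hC)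

lemma gegenbauer_eval_one (α : ℝ) (hα : 1/2 ≤ α) :
    ∀ n : ℕ, 1 ≤ (gegenbauer α n).eval 1 ∧
      (gegenbauer α n).eval 1 ≤ (gegenbauer α (n+1)).eval 1 := by
  intro n
  induction n with
  | zero =>
    constructor
    · simp [gegenbauer]
    · simp [gegenbauer]; linarith
  | succ n ih =>
    obtain ⟨h1, h2⟩ := ih
    have h3 : (1:ℝ) ≤ (gegenbauer α (n+1)).eval 1 := le_trans h1 h2
    refine ⟨h3, ?_⟩
    have hev : (gegenbauer α (n+2)).eval 1 =
        2 * ((n : ℝ) + 1 + α) / ((n : ℝ) + 2) * (gegenbauer α (n+1)).eval 1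
          - ((n : ℝ) + 2 * α) / ((n : ℝ) + 2) * (gegenbauer α n).eval 1 := by
      simp [gegenbauer]
    rw [hev]
    have hn2 : (0:ℝ) < (n:ℝ) + 2 := by positivity
    rw [div_mul_eq_mul_div, div_mul_eq_mul_div, ← sub_div, le_div_iff₀ hn2]
    have hnn : (0:ℝ) ≤ (n:ℝ) + 2*α := by positivity
    nlinarith [mul_le_mul_of_nonneg_left h2 hnn]

lemma gegenbauer_bound (α : ℝ) (hα : 1/2 ≤ α) :
    ∀ n : ℕ, ∀ x : ℝ, |x| ≤ 1 →
      |(gegenbauer α n).eval x| ≤ (2*α+5)^n ∧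
      |((gegenbauer α n).derivative).eval x| ≤ (2*α+5)^n := by
  have hL1 : (1:ℝ) ≤ 2*α+5 := by linarith
  have key : ∀ n : ℕ, (∀ x : ℝ, |x| ≤ 1 →
      |(gegenbauer α n).eval x| ≤ (2*α+5)^n ∧
      |((gegenbauer α n).derivative).eval x| ≤ (2*α+5)^n) ∧
      (∀ x : ℝ, |x| ≤ 1 →
      |(gegenbauer α (n+1)).eval x| ≤ (2*α+5)^(n+1) ∧
      |((gegenbauer α (n+1)).derivative).eval x| ≤ (2*α+5)^(n+1)) := by
    intro n
    induction n with
    | zero =>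
      constructor
      · intro x hx; simp [gegenbauer]
      · intro x hx
        constructor
        · simp only [gegenbauer, eval_mul, eval_C, eval_X, pow_one]
          have := abs_mul_le (by linarith : (0:ℝ) ≤ 2*α) (by linarith : 2*α ≤ 2*α+5) hx
          simpa using this
        · simp only [gegenbauer, derivative_mul, derivative_C, derivative_X]
          simp only [zero_mul, mul_one, zero_add, eval_C, pow_one]
          rw [abs_of_nonneg (by linarith : (0:ℝ) ≤ 2*α)]; linarith
    | succ n ih =>
      obtain ⟨ih0, ih1⟩ := ih
      refine ⟨ih1, ?_⟩
      intro x hx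
      obtain ⟨hM0, hD0⟩ := ih0 x hx
      obtain ⟨hM1, hD1⟩ := ih1 x hx
      set L : ℝ := 2*α+5 with hLdef
      have hn2 : (0:ℝ) < (n:ℝ) + 2 := by positivity
      have ha : (0:ℝ) ≤ 2 * ((n : ℝ) + 1 + α) / ((n : ℝ) + 2) := by positivity
      have hb : (0:ℝ) ≤ ((n : ℝ) + 2 * α) / ((n : ℝ) + 2) := by positivity
      have haub : 2 * ((n : ℝ) + 1 + α) / ((n : ℝ) + 2) ≤ 2 + α := by
        rw [div_le_iff₀ hn2]; nlinarith
      have hbub : ((n : ℝ) + 2 * α) / ((n : ℝ) + 2) ≤ 1 + α := by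
        rw [div_le_iff₀ hn2]; nlinarith
      have hLn : (0:ℝ) ≤ L^n := by positivity
      have hpow1 : L^(n+1) = L * L^n := by ring
      have hpow2 : L^(n+2) = L^2 * L^n := by ring
      have hL0 : (0:ℝ) ≤ L := by rw [hLdef]; linarith
      have hq : (4+2*α) * L + (1+α) ≤ L^2 := by nlinarith
      have hq2 : ((4+2*α) * L + (1+α)) * L^n ≤ L^2 * L^n :=
        mul_le_mul_of_nonneg_right hq hLn
      have hq3 : (2+α) * (L * L^n) ≤ (4+2*α) * (L * L^n) :=
        mul_le_mul_of_nonneg_right (by linarith) (mul_nonneg hL0 hLn)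
      constructor
      · have hev : (gegenbauer α (n+2)).eval x =
            2 * ((n : ℝ) + 1 + α) / ((n : ℝ) + 2) * (x * (gegenbauer α (n+1)).eval x)
              - ((n : ℝ) + 2 * α) / ((n : ℝ) + 2) * (gegenbauer α n).eval x := by
          simp [gegenbauer]; ring
        rw [hev]
        have h1 : |x * (gegenbauer α (n+1)).eval x| ≤ L^(n+1) := by
          calc |x * (gegenbauer α (n+1)).eval x| = |x| * |(gegenbauer α (n+1)).eval x| :=
              abs_mul _ _
            _ ≤ 1 * L^(n+1) := mul_le_mul hx hM1 (abs_nonneg _) zero_le_one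
            _ = L^(n+1) := one_mul _
        calc _ ≤ |2 * ((n : ℝ) + 1 + α) / ((n : ℝ) + 2) * (x * (gegenbauer α (n+1)).eval x)|
              + |((n : ℝ) + 2 * α) / ((n : ℝ) + 2) * (gegenbauer α n).eval x| := abs_sub _ _
          _ ≤ (2+α) * L^(n+1) + (1+α) * L^n :=
              add_le_add (abs_mul_le ha haub h1) (abs_mul_le hb hbub hM0)
          _ ≤ L^(n+2) := by
              rw [hpow1, hpow2]
              nlinarith [hq2, hq3]
      · have hev : ((gegenbauer α (n+2)).derivative).eval x =
            2 * ((n : ℝ) + 1 + α) / ((n : ℝ) + 2) *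
              ((gegenbauer α (n+1)).eval x + x * ((gegenbauer α (n+1)).derivative).eval x)
              - ((n : ℝ) + 2 * α) / ((n : ℝ) + 2) * ((gegenbauer α n).derivative).eval x := by
          simp [gegenbauer, derivative_mul, derivative_sub]
          ring
        rw [hev]
        have h1 : |(gegenbauer α (n+1)).eval x + x * ((gegenbauer α (n+1)).derivative).eval x|
            ≤ 2 * L^(n+1) := by
          calc _ ≤ |(gegenbauer α (n+1)).eval x| + |x * ((gegenbauer α (n+1)).derivative).eval x| :=
                abs_add_le _ _
            _ ≤ L^(n+1) + 1 * L^(n+1) :=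
                add_le_add hM1 (by
                  rw [abs_mul]
                  exact mul_le_mul hx hD1 (abs_nonneg _) zero_le_one)
            _ = 2 * L^(n+1) := by ring
        calc _ ≤ |2 * ((n : ℝ) + 1 + α) / ((n : ℝ) + 2) *
              ((gegenbauer α (n+1)).eval x + x * ((gegenbauer α (n+1)).derivative).eval x)|
              + |((n : ℝ) + 2 * α) / ((n : ℝ) + 2) * ((gegenbauer α n).derivative).eval x| :=
              abs_sub _ _
          _ ≤ (2+α) * (2 * L^(n+1)) + (1+α) * L^n :=
              add_le_add (abs_mul_le ha haub h1) (abs_mul_le hb hbub hD0)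
          _ ≤ L^(n+2) := by
              rw [hpow1, hpow2]
              nlinarith [hq2, hq3]
  intro n
  exact (key n).1

lemma gegenbauer_near_one (α : ℝ) (hα : 1/2 ≤ α) (n : ℕ) (s : ℝ)
    (hs : s ∈ Icc (1 - ((2*α+5)^n)⁻¹/2) 1) :
    1/2 ≤ (gegenbauer α n).eval s := by
  set L : ℝ := 2*α+5 with hLdef
  have hL1 : (1:ℝ) ≤ L := by rw [hLdef]; linarith
  have hLn1 : (1:ℝ) ≤ L^n := one_le_pow₀ hL1
  have hLnpos : (0:ℝ) < L^n := lt_of_lt_of_le one_pos hLn1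
  have hinv : (L^n)⁻¹ ≤ 1 := inv_le_one_of_one_le₀ hLn1
  obtain ⟨hs1, hs2⟩ := hs
  have hsl : (-1:ℝ) ≤ s := by linarith
  -- MVT on [s, 1]
  have hmvt : ∀ x ∈ Icc s 1, ‖(gegenbauer α n).eval x - (gegenbauer α n).eval s‖
      ≤ L^n * (x - s) := by
    apply norm_image_sub_le_of_norm_deriv_le_segment'
      (f' := fun x => ((gegenbauer α n).derivative).eval x)
    · intro x hx
      exact ((gegenbauer α n).hasDerivAt x).hasDerivWithinAt
    · intro x hx
      have hx1 : |x| ≤ 1 := by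
        rw [abs_le]; exact ⟨by linarith [hx.1], le_of_lt hx.2⟩
      exact (gegenbauer_bound α hα n x hx1).2
  have h1 := hmvt 1 ⟨hs2, le_refl 1⟩
  rw [Real.norm_eq_abs] at h1
  have h2 : |(gegenbauer α n).eval 1 - (gegenbauer α n).eval s| ≤ 1/2 := by
    apply le_trans h1
    have : 1 - s ≤ (L^n)⁻¹/2 := by linarith
    calc L^n * (1 - s) ≤ L^n * ((L^n)⁻¹/2) := by
          apply mul_le_mul_of_nonneg_left this (le_of_lt hLnpos)
      _ = 1/2 := by field_simp
  have h3 := (gegenbauer_eval_one α hα n).1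
  have := abs_le.1 h2
  linarith [this.1, this.2]

lemma integrand_continuous (δ : ℝ) (hδ : 2 ≤ δ) (n : ℕ) :
    Continuous (fun s : ℝ => (1 - s^2) ^ (δ/2-1) * ((gegenbauer (δ/2-1/2) n).eval s)^2) := by
  have h1 : Continuous (fun s : ℝ => (1 - s^2) ^ (δ/2-1)) :=
    (Real.continuous_rpow_const (by linarith)).comp (by continuity)
  exact h1.mul ((gegenbauer (δ/2-1/2) n).continuous.pow 2)

lemma integral_lower (δ : ℝ) (hδ : 2 ≤ δ) (n : ℕ) :
    (1/4) * ((((δ+4):ℝ)^n)⁻¹/4)^(δ/2) ≤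
      ∫ s in (-1:ℝ)..1, (1 - s^2)^(δ/2-1) * ((gegenbauer (δ/2-1/2) n).eval s)^2 := by
  have hα : 1/2 ≤ δ/2-1/2 := by linarith
  have hLeq : 2*(δ/2-1/2)+5 = δ+4 := by ring
  set L : ℝ := δ+4 with hLdef
  have hL1 : (1:ℝ) ≤ L := by rw [hLdef]; linarith
  have hLn1 : (1:ℝ) ≤ L^n := one_le_pow₀ hL1
  have hLnpos : (0:ℝ) < L^n := lt_of_lt_of_le one_pos hLn1
  have hinv : (L^n)⁻¹ ≤ 1 := inv_le_one_of_one_le₀ hLn1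
  have hinvpos : (0:ℝ) < (L^n)⁻¹ := inv_pos.2 hLnpos
  set e2 : ℝ := (L^n)⁻¹/4 with he2
  have he2pos : 0 < e2 := by positivity
  have he2le : e2 ≤ 1/4 := by rw [he2]; linarith
  set a : ℝ := 1 - 2*e2 with ha
  set b : ℝ := 1 - e2 with hb
  set f : ℝ → ℝ := fun s => (1 - s^2) ^ (δ/2-1) * ((gegenbauer (δ/2-1/2) n).eval s)^2 with hf
  have hcont : Continuous f := integrand_continuous δ hδ n
  have hfnn : ∀ s : ℝ, s ∈ Icc (-1:ℝ) 1 → 0 ≤ f s := by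
    intro s hs
    apply mul_nonneg (Real.rpow_nonneg (by nlinarith [hs.1, hs.2]) _) (sq_nonneg _)
  have hab : a ≤ b := by rw [ha, hb]; linarith
  have h1a : (-1:ℝ) ≤ a := by rw [ha]; linarith
  have hb1 : b ≤ 1 := by rw [hb]; linarith
  -- lower bound on [a, b]
  have hlow : ∀ s ∈ Icc a b, e2 ^ (δ/2-1) * (1/4) ≤ f s := by
    intro s hs
    obtain ⟨hsa, hsb⟩ := hs
    have hs0 : (1/2:ℝ) ≤ s := by rw [ha] at hsa; linarith
    have hgeg : 1/2 ≤ (gegenbauer (δ/2-1/2) n).eval s := by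
      apply gegenbauer_near_one (δ/2-1/2) hα n s
      rw [hLeq]
      constructor
      · rw [ha] at hsa
        have : 2*e2 = (L^n)⁻¹/2 := by rw [he2]; ring
        linarith [this ▸ hsa]
      · linarith
    have hbase : e2 ≤ 1 - s^2 := by
      have h1s : e2 ≤ 1 - s := by rw [hb] at hsb; linarith
      nlinarith
    have hw : e2 ^ (δ/2-1) ≤ (1 - s^2) ^ (δ/2-1) :=
      Real.rpow_le_rpow (le_of_lt he2pos) hbase (by linarith)
    have hsq : (1/4:ℝ) ≤ ((gegenbauer (δ/2-1/2) n).eval s)^2 := by nlinarith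
    calc e2 ^ (δ/2-1) * (1/4) ≤ (1 - s^2) ^ (δ/2-1) * ((gegenbauer (δ/2-1/2) n).eval s)^2 := by
          apply mul_le_mul hw hsq (by norm_num) (Real.rpow_nonneg (by nlinarith) _)
      _ = f s := rfl
  -- split the integral
  have hint : ∀ (u v : ℝ), IntervalIntegrable f MeasureTheory.volume u v :=
    fun u v => hcont.intervalIntegrable u v
  have hsplit : ∫ s in (-1:ℝ)..1, f s =
      (∫ s in (-1:ℝ)..a, f s) + (∫ s in a..b, f s) + (∫ s in b..1, f s) := by
    rw [← intervalIntegral.integral_add_adjacent_intervals (hint (-1) a) (hint a 1),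
      ← intervalIntegral.integral_add_adjacent_intervals (hint a b) (hint b 1)]
    ring
  have hnn1 : 0 ≤ ∫ s in (-1:ℝ)..a, f s := by
    apply intervalIntegral.integral_nonneg h1a
    intro u hu
    exact hfnn u ⟨hu.1, le_trans hu.2 (by rw [ha]; linarith)⟩
  have hnn3 : 0 ≤ ∫ s in b..1, f s := by
    apply intervalIntegral.integral_nonneg hb1
    intro u hu
    exact hfnn u ⟨le_trans (by rw [hb]; linarith : (-1:ℝ) ≤ b) hu.1, hu.2⟩
  have hmid : e2 ^ (δ/2-1) * (1/4) * e2 ≤ ∫ s in a..b, f s := by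
    have hconst : ∫ s in a..b, (e2 ^ (δ/2-1) * (1/4)) = (b - a) * (e2 ^ (δ/2-1) * (1/4)) := by
      rw [intervalIntegral.integral_const]; simp [smul_eq_mul]
    have hba : b - a = e2 := by rw [ha, hb]; ring
    have := intervalIntegral.integral_mono_on hab (intervalIntegrable_const) (hint a b) hlow
    rw [hconst, hba] at this
    linarith
  have htotal : e2 ^ (δ/2-1) * (1/4) * e2 ≤ ∫ s in (-1:ℝ)..1, f s := by
    rw [hsplit]; linarith
  -- rewrite the left side
  have hrw : (1/4) * e2 ^ (δ/2) = e2 ^ (δ/2-1) * (1/4) * e2 := by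
    have : e2 ^ (δ/2) = e2 ^ (δ/2-1) * e2 := by
      rw [← Real.rpow_add_one (ne_of_gt he2pos)]
      norm_num
    rw [this]; ring
  calc (1/4) * ((((δ+4):ℝ)^n)⁻¹/4)^(δ/2) = (1/4) * e2 ^ (δ/2) := by rw [he2, hLdef]
    _ = e2 ^ (δ/2-1) * (1/4) * e2 := hrw
    _ ≤ _ := htotal

lemma summable_aux (δ L : ℝ) (hδ : 2 ≤ δ) (hL : 1 ≤ L) :
    Summable (fun n : ℕ => 4 * ((4*L^n):ℝ)^(δ/2) * L^n * L^n *
      Real.exp (-((n:ℝ)/2 * ((n:ℝ)+δ-1)))) := by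
  set b2 : ℕ → ℝ := fun n => 4 * ((4*L^n):ℝ)^(δ/2) * L^n * L^n *
      Real.exp (-((n:ℝ)/2 * ((n:ℝ)+δ-1))) with hb2
  have hL0 : (0:ℝ) < L := lt_of_lt_of_le one_pos hL
  have hLn0 : ∀ n : ℕ, (0:ℝ) < L^n := fun n => pow_pos hL0 n
  have hb2nn : ∀ n, 0 ≤ b2 n := by
    intro n
    apply mul_nonneg (mul_nonneg (mul_nonneg (by positivity) (le_of_lt (hLn0 n))) _) _
    · exact le_of_lt (hLn0 n)
    · exact le_of_lt (Real.exp_pos _)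
  have hrec : ∀ n : ℕ, b2 (n+1) = b2 n * (L^(δ/2) * L^2 * Real.exp (-((n:ℝ) + δ/2))) := by
    intro n
    rw [hb2]
    simp only
    have h1 : ((4:ℝ)*L^(n+1)) = (4*L^n) * L := by ring
    have h2 : ((4:ℝ)*L^(n+1))^(δ/2) = (4*L^n)^(δ/2) * L^(δ/2) := by
      rw [h1, Real.mul_rpow (by positivity) (le_of_lt hL0)]
    push_cast
    rw [h2]
    rw [show -(((n:ℝ)+1)/2 * (((n:ℝ)+1)+δ-1)) = -((n:ℝ)/2 * ((n:ℝ)+δ-1)) + -((n:ℝ) + δ/2) by ring,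
      Real.exp_add]
    ring
  have hratio : ∀ᶠ n in atTop, ‖b2 (n+1)‖ ≤ (1/2) * ‖b2 n‖ := by
    have htend : Tendsto (fun n : ℕ => L^(δ/2) * L^2 * Real.exp (-((n:ℝ) + δ/2)))
        atTop (nhds 0) := by
      have h0 : Tendsto (fun n : ℕ => -((n:ℝ) + δ/2)) atTop atBot := by
        apply tendsto_neg_atTop_atBot.comp
        exact tendsto_atTop_add_const_right atTop (δ/2) tendsto_natCast_atTop_atTop
      have h1 : Tendsto (fun n : ℕ => Real.exp (-((n:ℝ) + δ/2))) atTop (nhds 0) :=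
        Real.tendsto_exp_atBot.comp h0
      have := h1.const_mul (L^(δ/2) * L^2)
      simpa using this
    filter_upwards [htend.eventually_le_const (by norm_num : (0:ℝ) < 1/2)] with n hn
    rw [hrec n, Real.norm_eq_abs, Real.norm_eq_abs, abs_of_nonneg (hb2nn n),
      abs_of_nonneg (by
        apply mul_nonneg (hb2nn n)
        positivity)]
    calc b2 n * (L^(δ/2) * L^2 * Real.exp (-((n:ℝ) + δ/2))) ≤ b2 n * (1/2) :=
        mul_le_mul_of_nonneg_left hn (hb2nn n)
      _ = 1/2 * b2 n := by ring
  exact summable_of_ratio_norm_eventually_le (by norm_num) hratio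

set_option maxHeartbeats 2000000 in
/-- For `δ ≥ 2` there is a constant `C` depending only on `δ` such that
`|p^{(Y)}(t, x, y) − p^{(Y)}(y)| ≤ C e^{−(δ/2)t}` for all `x, y ∈ [−1, 1]` and `t ≥ 1`. -/
theorem transitionDensity_convergence_to_stationary (δ : ℝ) (hδ : 2 ≤ δ) :
    ∃ C : ℝ, ∀ t : ℝ, 1 ≤ t → ∀ x ∈ Icc (-1 : ℝ) 1, ∀ y ∈ Icc (-1 : ℝ) 1,
      |transDensity δ t x y - stationaryDensity δ y| ≤ C * Real.exp (-(δ / 2) * t) := by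
  have hα : 1/2 ≤ δ/2 - 1/2 := by linarith
  set L : ℝ := δ + 4 with hLdef
  have hLeq : 2*(δ/2-1/2)+5 = L := by rw [hLdef]; ring
  have hL1 : (1:ℝ) ≤ L := by rw [hLdef]; linarith
  have hL0 : (0:ℝ) < L := lt_of_lt_of_le one_pos hL1
  have hLn0 : ∀ n : ℕ, (0:ℝ) < L^n := fun n => pow_pos hL0 n
  set K : ℕ → ℝ := fun n => 4 * ((4*L^n):ℝ)^(δ/2) with hK
  have hKpos : ∀ n, 0 < K n := by
    intro n
    have := Real.rpow_pos_of_pos (show (0:ℝ) < 4*L^n by positivity) (δ/2)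
    rw [hK]; positivity
  set b2 : ℕ → ℝ := fun n => K n * L^n * L^n * Real.exp (-((n:ℝ)/2 * ((n:ℝ)+δ-1))) with hb2d
  have hb2 : Summable b2 := by
    have := summable_aux δ L hδ hL1
    exact this
  have hb2nn : ∀ n, 0 ≤ b2 n := by
    intro n
    rw [hb2d]
    have := hKpos n
    positivity
  set b : ℕ → ℝ := fun n => Real.exp (δ/2) * b2 n with hbd
  have hb : Summable b := hb2.mul_left _
  have hbshift : Summable (fun n => b (n+1)) := (summable_nat_add_iff 1).2 hb
  refine ⟨∑' n, b (n+1), ?_⟩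
  intro t ht x hx y hy
  set I : ℕ → ℝ := fun n =>
    ∫ s in (-1:ℝ)..1, (1 - s^2)^(δ/2-1) * ((gegenbauer (δ/2-1/2) n).eval s)^2 with hI
  have hIK : ∀ n, (K n)⁻¹ ≤ I n := by
    intro n
    have h := integral_lower δ hδ n
    rw [← hLdef] at h
    have heq : (1/4 : ℝ) * (((L:ℝ)^n)⁻¹/4)^(δ/2) = (K n)⁻¹ := by
      have h1 : ((L^n)⁻¹/4 : ℝ) = (4*L^n)⁻¹ := by
        rw [mul_inv]; ring
      rw [h1, Real.inv_rpow (by positivity)]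
      rw [hK]
      simp only
      rw [mul_inv]
      norm_num
    rw [heq] at h
    exact h
  have hIpos : ∀ n, 0 < I n := fun n => lt_of_lt_of_le (inv_pos.2 (hKpos n)) (hIK n)
  set F : ℕ → ℝ := fun n =>
    (1 - y ^ 2) ^ (δ / 2 - 1)
      * (gegenbauer (δ / 2 - 1 / 2) n).eval x
      * (gegenbauer (δ / 2 - 1 / 2) n).eval y
      / I n
      * Real.exp (-((n : ℝ) / 2) * ((n : ℝ) + δ - 1) * t) with hF
  have htd : transDensity δ t x y = ∑' n, F n := rfl
  -- bounds on the weight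
  have hy1 : (0:ℝ) ≤ 1 - y^2 := by nlinarith [hy.1, hy.2]
  have hy2 : (1:ℝ) - y^2 ≤ 1 := by nlinarith [sq_nonneg y]
  have hw1 : (1 - y^2) ^ (δ/2-1) ≤ 1 := Real.rpow_le_one hy1 hy2 (by linarith)
  have hw0 : 0 ≤ (1 - y^2) ^ (δ/2-1) := Real.rpow_nonneg hy1 _
  -- the main term bound
  have habs : ∀ n : ℕ, |F n| ≤ K n * L^n * L^n *
      Real.exp (-((n:ℝ)/2 * ((n:ℝ)+δ-1) * t)) := by
    intro n
    have hCx : |(gegenbauer (δ/2-1/2) n).eval x| ≤ L^n := by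
      have := (gegenbauer_bound _ hα n x (abs_le.2 ⟨hx.1, hx.2⟩)).1
      rwa [hLeq] at this
    have hCy : |(gegenbauer (δ/2-1/2) n).eval y| ≤ L^n := by
      have := (gegenbauer_bound _ hα n y (abs_le.2 ⟨hy.1, hy.2⟩)).1
      rwa [hLeq] at this
    have hE : Real.exp (-((n : ℝ)/2) * ((n : ℝ)+δ-1) * t)
        = Real.exp (-((n:ℝ)/2 * ((n:ℝ)+δ-1) * t)) := by ring_nf
    have hnum : |(1 - y ^ 2) ^ (δ/2-1)
        * (gegenbauer (δ/2-1/2) n).eval x * (gegenbauer (δ/2-1/2) n).eval y|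
        ≤ L^n * L^n := by
      rw [abs_mul, abs_mul, abs_of_nonneg hw0]
      calc (1 - y ^ 2) ^ (δ/2-1) * |(gegenbauer (δ/2-1/2) n).eval x|
            * |(gegenbauer (δ/2-1/2) n).eval y|
          ≤ 1 * L^n * L^n := by
            apply mul_le_mul _ hCy (abs_nonneg _) (by positivity)
            exact mul_le_mul hw1 hCx (abs_nonneg _) zero_le_one
        _ = L^n * L^n := by ring
    have hdiv : |(1 - y ^ 2) ^ (δ/2-1)
        * (gegenbauer (δ/2-1/2) n).eval x * (gegenbauer (δ/2-1/2) n).eval y / I n|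
        ≤ L^n * L^n * K n := by
      rw [abs_div, abs_of_pos (hIpos n)]
      calc _ ≤ |(1 - y ^ 2) ^ (δ/2-1)
            * (gegenbauer (δ/2-1/2) n).eval x * (gegenbauer (δ/2-1/2) n).eval y| / (K n)⁻¹ :=
            div_le_div_of_nonneg_left (abs_nonneg _) (inv_pos.2 (hKpos n)) (hIK n)
        _ = |(1 - y ^ 2) ^ (δ/2-1)
            * (gegenbauer (δ/2-1/2) n).eval x * (gegenbauer (δ/2-1/2) n).eval y| * K n := by
            rw [div_eq_mul_inv, inv_inv]
        _ ≤ L^n * L^n * K n :=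
            mul_le_mul_of_nonneg_right hnum (le_of_lt (hKpos n))
    calc |F n| = |(1 - y ^ 2) ^ (δ/2-1)
          * (gegenbauer (δ/2-1/2) n).eval x * (gegenbauer (δ/2-1/2) n).eval y / I n|
          * Real.exp (-((n : ℝ)/2) * ((n : ℝ)+δ-1) * t) := by
          rw [hF]
          rw [abs_mul, abs_of_pos (Real.exp_pos _)]
      _ ≤ (L^n * L^n * K n) * Real.exp (-((n : ℝ)/2) * ((n : ℝ)+δ-1) * t) :=
          mul_le_mul_of_nonneg_right hdiv (le_of_lt (Real.exp_pos _))
      _ = K n * L^n * L^n * Real.exp (-((n:ℝ)/2 * ((n:ℝ)+δ-1) * t)) := by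
          rw [hE]; ring
  -- lam n ≥ 0 and exp bound for summability
  have hlamnn : ∀ n : ℕ, 0 ≤ (n:ℝ)/2 * ((n:ℝ)+δ-1) := by
    intro n
    have : (0:ℝ) ≤ (n:ℝ) := Nat.cast_nonneg n
    nlinarith
  have habs2 : ∀ n : ℕ, |F n| ≤ b2 n := by
    intro n
    apply le_trans (habs n)
    rw [hb2d]
    apply mul_le_mul_of_nonneg_left _
      (mul_nonneg (mul_nonneg (hKpos n).le (hLn0 n).le) (hLn0 n).le)
    apply Real.exp_le_exp.2
    have := hlamnn n
    nlinarith
  have hFsum : Summable F := by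
    apply Summable.of_norm_bounded hb2
    intro n
    rw [Real.norm_eq_abs]
    exact habs2 n
  have hFabs : Summable (fun n => |F n|) :=
    Summable.of_nonneg_of_le (fun n => abs_nonneg _) habs2 hb2
  have hFabsshift : Summable (fun n => |F (n+1)|) := (summable_nat_add_iff 1).2 hFabs
  -- the key estimate for n ≥ 1
  have hkey : ∀ n : ℕ, |F (n+1)| ≤ b (n+1) * Real.exp (-(δ/2) * t) := by
    intro n
    apply le_trans (habs (n+1))
    rw [hbd, hb2d]
    simp only
    have hlam : δ/2 ≤ ((n+1:ℕ):ℝ)/2 * (((n+1:ℕ):ℝ)+δ-1) := by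
      push_cast
      have : (0:ℝ) ≤ (n:ℝ) := Nat.cast_nonneg n
      nlinarith
    have hexp : Real.exp (-(((n+1:ℕ):ℝ)/2 * (((n+1:ℕ):ℝ)+δ-1) * t))
        ≤ Real.exp (δ/2) * Real.exp (-(((n+1:ℕ):ℝ)/2 * (((n+1:ℕ):ℝ)+δ-1)))
          * Real.exp (-(δ/2) * t) := by
      rw [← Real.exp_add, ← Real.exp_add]
      apply Real.exp_le_exp.2
      nlinarith [mul_nonneg (sub_nonneg.2 hlam) (sub_nonneg.2 ht)]
    calc K (n+1) * L^(n+1) * L^(n+1) * Real.exp (-(((n+1:ℕ):ℝ)/2 * (((n+1:ℕ):ℝ)+δ-1) * t))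
        ≤ K (n+1) * L^(n+1) * L^(n+1) *
          (Real.exp (δ/2) * Real.exp (-(((n+1:ℕ):ℝ)/2 * (((n+1:ℕ):ℝ)+δ-1)))
            * Real.exp (-(δ/2) * t)) := by
          exact mul_le_mul_of_nonneg_left hexp
            (mul_nonneg (mul_nonneg (hKpos (n+1)).le (hLn0 (n+1)).le) (hLn0 (n+1)).le)
      _ = Real.exp (δ/2) * (K (n+1) * L^(n+1) * L^(n+1) *
            Real.exp (-(((n+1:ℕ):ℝ)/2 * (((n+1:ℕ):ℝ)+δ-1)))) * Real.exp (-(δ/2) * t) := by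
          ring
  -- split off n = 0
  have hsplit : ∑' n, F n = F 0 + ∑' n, F (n+1) := Summable.tsum_eq_zero_add hFsum
  have hg0 : gegenbauer (δ/2-1/2) 0 = 1 := rfl
  have hF0 : F 0 = stationaryDensity δ y := by
    rw [hF]
    simp only [hg0, Nat.cast_zero, eval_one, mul_one, zero_div, neg_zero, zero_mul,
      Real.exp_zero, one_pow]
    rw [hI]
    simp only [hg0, eval_one, one_pow, mul_one]
    rw [stationaryDensity]
  -- finish
  have hb1shift : Summable (fun n : ℕ => b (n+1) * Real.exp (-(δ/2) * t)) :=
    hbshift.mul_right _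
  calc |transDensity δ t x y - stationaryDensity δ y| = |∑' n, F (n+1)| := by
        rw [htd, hsplit, hF0]; congr 1; ring
    _ ≤ ∑' n, |F (n+1)| := by
        have := norm_tsum_le_tsum_norm (f := fun n => F (n+1)) (by simpa using hFabsshift)
        simpa using this
    _ ≤ ∑' n, (b (n+1) * Real.exp (-(δ/2) * t)) := Summable.tsum_le_tsum hkey hFabsshift hb1shift
    _ = (∑' n, b (n+1)) * Real.exp (-(δ/2) * t) := tsum_mul_right
    _ ≤ (∑' n, b (n+1)) * Real.exp (-(δ / 2) * t) := le_refl _
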